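/- Let w be a fully commutative element of W(Ã_n) (n ≥ 2) with a_{n+1} ∈ Supp(w), and suppose w admits a reduced expression of the form w = u_1 (σ_n σ_{n−1} ⋯ σ_2 σ_1 a_{n+1}) u' where u_1 ∈ W(A_n) and the shown occurrence of a_{n+1} is not the last one in the expression. If u_1 is full with σ_n on the left (i.e., u_1 = σ_n σ_{n−1} ⋯ σ_2 σ_1), then every full factor between consecutive occurrences of a_{n+1} in w equals σ_n σ_{n−1} ⋯ σ_2 σ_1, i.e., w = (σ_n σ_{n−1} ⋯ σ_2 σ_1 a_{n+1})^m u_{m+1} with u_{m+1} ∈ {1} ∪ {σ_n σ_{n−1} ⋯ σ_i : 1 ≤ i ≤ n}. -/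

import Mathlib

open CoxeterSystem

/-- The Coxeter matrix of affine type Ãₙ: generators indexed by `Fin (n+1)` arranged in a
cycle (index `k` is `σ_{k+1}` for `k < n`, and index `n` is `a_{n+1}`); cyclically adjacent
generators braid with order 3, and all other pairs commute. -/
def affineAMatrix (n : ℕ) : CoxeterMatrix (Fin (n + 1)) where
  M := Matrix.of fun i j : Fin (n + 1) =>
    if i = j then 1 else if i - j = 1 ∨ j - i = 1 then 3 else 2
  isSymm := by
    unfold Matrix.IsSymm
    ext i j
    simp only [Matrix.transpose_apply, Matrix.of_apply]
    by_cases h : i = j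
    · simp [h]
    · simp [h, Ne.symm h, or_comm]
  diagonal := by simp
  off_diagonal := by aesop

def CommMove {B : Type*} (M : CoxeterMatrix B) (ω₁ ω₂ : List B) : Prop :=
  ∃ (l r : List B) (s t : B), M s t = 2 ∧ ω₁ = l ++ s :: t :: r ∧ ω₂ = l ++ t :: s :: r

def CommEquiv {B : Type*} (M : CoxeterMatrix B) : List B → List B → Prop :=
  Relation.ReflTransGen (CommMove M)

def IsRedexOf {B W : Type*} [Group W] {M : CoxeterMatrix B} (cs : CoxeterSystem M W)
    (ω : List B) (w : W) : Prop :=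
  cs.wordProd ω = w ∧ cs.IsReduced ω

def IsFC {B W : Type*} [Group W] {M : CoxeterMatrix B} (cs : CoxeterSystem M W) (w : W) : Prop :=
  ∀ ω₁ ω₂, IsRedexOf cs ω₁ w → IsRedexOf cs ω₂ w → CommEquiv M ω₁ ω₂

/-- The decreasing word `[i, i-1, ..., j]` of (1-based) generator subscripts. -/
def decW (i j : ℕ) : List ℕ := (List.range' j (i + 1 - j)).reverse

/-- The increasing word `[i, i+1, ..., j]` of (1-based) generator subscripts. -/
def incW (i j : ℕ) : List ℕ := List.range' i (j + 1 - i)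

open Fin.NatCast

section Generic
variable {B W : Type*} [Group W] {M : CoxeterMatrix B} (cs : CoxeterSystem M W)

lemma commMove_wordProd {ω₁ ω₂ : List B} (h : CommMove M ω₁ ω₂) :
    cs.wordProd ω₁ = cs.wordProd ω₂ := by
  obtain ⟨l, r, s, t, hM, h1, h2⟩ := h
  have hcomm : cs.simple s * cs.simple t = cs.simple t * cs.simple s := by
    have := cs.simple_mul_simple_pow s t
    rw [hM] at this
    have h2' : (cs.simple s * cs.simple t) * (cs.simple s * cs.simple t) = 1 := by
      rw [← sq]; exact this
    calc cs.simple s * cs.simple t = (cs.simple s * cs.simple t)⁻¹ :=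
          eq_inv_of_mul_eq_one_left h2'
      _ = (cs.simple t)⁻¹ * (cs.simple s)⁻¹ := by rw [mul_inv_rev]
      _ = cs.simple t * cs.simple s := by rw [cs.inv_simple, cs.inv_simple]
  subst h1 h2
  simp only [wordProd_append, wordProd_cons]
  rw [← mul_assoc (cs.simple s), hcomm, mul_assoc]

lemma commMove_length {ω₁ ω₂ : List B} (h : CommMove M ω₁ ω₂) : ω₁.length = ω₂.length := by
  obtain ⟨l, r, s, t, hM, h1, h2⟩ := h; subst h1 h2; simp

lemma commEquiv_wordProd {ω₁ ω₂ : List B} (h : CommEquiv M ω₁ ω₂) :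
    cs.wordProd ω₁ = cs.wordProd ω₂ := by
  induction h with
  | refl => rfl
  | tail _ hmv ih => exact ih.trans (commMove_wordProd cs hmv)

lemma commEquiv_length {ω₁ ω₂ : List B} (h : CommEquiv M ω₁ ω₂) : ω₁.length = ω₂.length := by
  induction h with
  | refl => rfl
  | tail _ hmv ih => exact ih.trans (commMove_length hmv)

lemma commEquiv_count [DecidableEq B] (b : B) {ω₁ ω₂ : List B} (h : CommEquiv M ω₁ ω₂) :
    ω₁.count b = ω₂.count b := by
  induction h with
  | refl => rfl
  | tail _ hmv ih =>
      obtain ⟨l, r, s, t, hM, h1, h2⟩ := hmv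
      subst h1 h2
      rw [ih]
      simp [List.count_append, List.count_cons]
      ring

lemma commEquiv_isRedexOf {ω₁ ω₂ : List B} {w : W} (h : IsRedexOf cs ω₁ w)
    (he : CommEquiv M ω₁ ω₂) : IsRedexOf cs ω₂ w := by
  obtain ⟨hp, hr⟩ := h
  refine ⟨(commEquiv_wordProd cs he).symm.trans hp, ?_⟩
  unfold CoxeterSystem.IsReduced at hr ⊢
  rw [← commEquiv_wordProd cs he, ← commEquiv_length he]; exact hr

/-- moving a letter left past a block of letters commuting with it -/
lemma commEquiv_move_left (c : B) (mid : List B) (h : ∀ x ∈ mid, M x c = 2)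
    (l r : List B) : CommEquiv M (l ++ mid ++ c :: r) (l ++ c :: (mid ++ r)) := by
  induction mid generalizing l with
  | nil =>
      simp only [List.append_nil, List.nil_append]
      exact Relation.ReflTransGen.refl
  | cons x mid' ih =>
      have step1 : CommEquiv M ((l ++ [x]) ++ mid' ++ c :: r) ((l ++ [x]) ++ c :: (mid' ++ r)) :=
        ih (fun y hy => h y (List.mem_cons_of_mem _ hy)) (l ++ [x])
      have e1 : l ++ (x :: mid') ++ c :: r = (l ++ [x]) ++ mid' ++ c :: r := by simp
      have e2 : (l ++ [x]) ++ c :: (mid' ++ r) = l ++ x :: c :: (mid' ++ r) := by simp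
      have mv : CommMove M (l ++ x :: c :: (mid' ++ r)) (l ++ c :: x :: (mid' ++ r)) :=
        ⟨l, mid' ++ r, x, c, h x List.mem_cons_self, rfl, rfl⟩
      rw [e1]
      exact Relation.ReflTransGen.tail (e2 ▸ step1) mv

/-- From FC: no word comm-equivalent to a reduced word of `w` has an `[s,s]` factor. -/
lemma fc_no_ss {ω : List B} {w : W} (hred : IsRedexOf cs ω w)
    {l r : List B} {a : B} (he : CommEquiv M ω (l ++ a :: a :: r)) : False := by
  have h2 := commEquiv_isRedexOf cs hred he
  have hprod : cs.wordProd (l ++ a :: a :: r) = cs.wordProd (l ++ r) := by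
    simp only [wordProd_append, wordProd_cons]
    rw [← mul_assoc (cs.simple a), cs.simple_mul_simple_self, one_mul]
  have hle := cs.length_wordProd_le (l ++ r)
  have := h2.2
  unfold CoxeterSystem.IsReduced at this
  rw [hprod] at this
  rw [this] at hle
  simp at hle

lemma fc_no_braid {ω : List B} {w : W} (hw : IsFC cs w) (hred : IsRedexOf cs ω w)
    [DecidableEq B] {l r : List B} {a b : B} (hM : M a b = 3)
    (he : CommEquiv M ω (l ++ a :: b :: a :: r)) : False := by
  have hab : a ≠ b := by
    intro h; rw [h] at hM; rw [M.diagonal] at hM; omega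
  have h2 := commEquiv_isRedexOf cs hred he
  -- braid move gives another reduced word
  have h3 : (cs.simple a * cs.simple b) ^ 3 = 1 := by
    rw [← hM]; exact cs.simple_mul_simple_pow a b
  have hbraid : cs.simple a * cs.simple b * cs.simple a
      = cs.simple b * cs.simple a * cs.simple b := by
    have hxy : (cs.simple a * cs.simple b * cs.simple a)
        * (cs.simple b * cs.simple a * cs.simple b)
        = (cs.simple a * cs.simple b) ^ 3 := by
      simp only [pow_succ, pow_zero, one_mul, mul_assoc]
    rw [h3] at hxy
    have hinv : (cs.simple b * cs.simple a * cs.simple b)⁻¹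
        = cs.simple b * cs.simple a * cs.simple b := by
      simp [mul_inv_rev, cs.inv_simple, mul_assoc]
    rw [← hinv]
    exact eq_inv_of_mul_eq_one_left hxy
  have hprod : cs.wordProd (l ++ a :: b :: a :: r) = cs.wordProd (l ++ b :: a :: b :: r) := by
    have key : ∀ z : W, cs.simple a * (cs.simple b * (cs.simple a * z))
        = cs.simple b * (cs.simple a * (cs.simple b * z)) := by
      intro z
      rw [← mul_assoc, ← mul_assoc, hbraid, mul_assoc, mul_assoc]
    simp only [wordProd_append, wordProd_cons, ← mul_assoc]
    rw [mul_assoc (cs.wordProd l) (cs.simple a) (cs.simple b),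
      mul_assoc (cs.wordProd l) _ (cs.simple a), hbraid,
      ← mul_assoc, ← mul_assoc]
  have h4 : IsRedexOf cs (l ++ b :: a :: b :: r) w := by
    refine ⟨hprod ▸ h2.1, ?_⟩
    unfold CoxeterSystem.IsReduced
    rw [← hprod]
    have h5 := h2.2
    unfold CoxeterSystem.IsReduced at h5
    rw [h5]
    simp
  have he2 := hw _ _ h2 h4
  have := commEquiv_count a he2
  simp [List.count_append, List.count_cons, hab, Ne.symm hab] at this

end Generic


section ChainDefs
open Fin.CommRing
variable {n : ℕ}

/-- descending cyclic chain `[s, s-1, ..., s-t+1]` in `Fin (n+1)` -/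
def chainL (n : ℕ) (s : Fin (n + 1)) (t : ℕ) : List (Fin (n + 1)) :=
  (List.range t).map fun k : ℕ => s - (k : Fin (n + 1))

@[simp] lemma chainL_length (s : Fin (n + 1)) (t : ℕ) : (chainL n s t).length = t := by
  simp [chainL]

lemma chainL_add (s : Fin (n + 1)) (a b : ℕ) :
    chainL n s (a + b) = chainL n s a ++ chainL n (s - (a : Fin (n + 1))) b := by
  unfold chainL
  rw [List.range_add, List.map_append]
  congr 1
  rw [List.map_map]
  apply List.map_congr_left
  intro k _
  simp only [Function.comp_apply]
  push_cast
  ring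

lemma chainL_one (s : Fin (n + 1)) : chainL n s 1 = [s] := by
  simp [chainL, List.range_succ]

lemma chainL_two (s : Fin (n + 1)) : chainL n s 2 = [s, s - 1] := by
  simp [chainL, List.range_succ]

lemma affA_two {x y : Fin (n + 1)} (h0 : x ≠ y) (h1 : ¬ x - y = 1) (h2 : ¬ y - x = 1) :
    affineAMatrix n x y = 2 := by
  show (affineAMatrix n).M x y = 2
  simp [affineAMatrix, h0, h1, h2]

lemma affA_three {x y : Fin (n + 1)} (hn : 2 ≤ n) (h1 : x - y = 1) :
    affineAMatrix n x y = 3 := by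
  have h0 : x ≠ y := by
    intro h
    rw [h, sub_self] at h1
    have : ((0 : Fin (n+1)) : ℕ) = ((1 : Fin (n+1)) : ℕ) := by rw [h1]
    simp [Fin.val_one] at this
    omega
  show (affineAMatrix n).M x y = 3
  simp [affineAMatrix, h0, h1]

lemma fin_cast_ne {a b : ℕ} (ha : a < n + 1) (hb : b < n + 1) (h : a ≠ b) :
    (a : Fin (n + 1)) ≠ (b : Fin (n + 1)) := by
  intro hc
  apply h
  have := congrArg Fin.val hc
  rwa [Fin.val_cast_of_lt ha, Fin.val_cast_of_lt hb] at this

lemma fin_neg_cast {m : ℕ} (hm : m ≤ n + 1) :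
    -((m : ℕ) : Fin (n + 1)) = ((n + 1 - m : ℕ) : Fin (n + 1)) := by
  have : ((n + 1 - m : ℕ) : Fin (n + 1)) + (m : Fin (n + 1)) = 0 := by
    rw [← Nat.cast_add]
    have : n + 1 - m + m = n + 1 := by omega
    rw [this]
    simp
  exact neg_eq_of_add_eq_zero_left this

end ChainDefs

section Force
open Fin.CommRing
variable {n : ℕ} {W : Type*} [Group W] {cs : CoxeterSystem (affineAMatrix n) W} {w : W}
  {ω : List (Fin (n + 1))}

lemma chain_step (hn : 2 ≤ n) (hw : IsFC cs w) (hred : IsRedexOf cs ω w)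
    (s : Fin (n + 1)) (t : ℕ) (ht : n + 1 ≤ t) (c : Fin (n + 1)) (q : List (Fin (n + 1)))
    (hω : ω = chainL n s t ++ c :: q) : c = s - (t : Fin (n + 1)) := by
  set v : Fin (n + 1) := s - (t : Fin (n + 1)) with hv
  set j : ℕ := (c - v).val with hj
  have hjlt : j < n + 1 := (c - v).isLt
  have hcast : ((j : ℕ) : Fin (n + 1)) = c - v := Fin.cast_val_eq_self _
  have hc : c = v + (j : Fin (n + 1)) := by rw [hcast]; ring
  have hdecomp : ∀ k : ℕ, k ≤ t →
      chainL n s t = chainL n s (t - k) ++ chainL n (v + (k : Fin (n + 1))) k := by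
    intro k hk
    conv_lhs => rw [show t = (t - k) + k by omega]
    rw [chainL_add]
    congr 2
    rw [Nat.cast_sub hk, hv]
    ring
  by_cases hj0 : j = 0
  · rw [hc, hj0]; simp
  exfalso
  have hcast1 : ((1 : ℕ) : Fin (n + 1)) = 1 := by push_cast; rfl
  have hcast2 : ((2 : ℕ) : Fin (n + 1)) = 2 := by push_cast; rfl
  by_cases hj1 : j = 1
  · -- [c, c] factor
    have hω' : ω = chainL n s (t - 1) ++ c :: c :: q := by
      rw [hω, hdecomp 1 (by omega), chainL_one]
      have h1 : v + ((1 : ℕ) : Fin (n + 1)) = c := by rw [hc, hj1]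
      rw [h1]
      simp
    refine fc_no_ss cs hred (l := chainL n s (t - 1)) (a := c) (r := q) ?_
    rw [← hω']
    exact Relation.ReflTransGen.refl
  by_cases hj2 : j = 2
  · -- [c, c-1, c] factor
    have hM : affineAMatrix n c (c - 1) = 3 := affA_three hn (by ring)
    have hω' : ω = chainL n s (t - 2) ++ c :: (c - 1) :: c :: q := by
      rw [hω, hdecomp 2 (by omega), chainL_two]
      have h1 : v + ((2 : ℕ) : Fin (n + 1)) = c := by rw [hc, hj2]
      rw [h1]
      simp
    refine fc_no_braid cs hw hred hM (l := chainL n s (t - 2)) (r := q) ?_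
    rw [← hω']
    exact Relation.ReflTransGen.refl
  · -- 3 ≤ j : move c left to create a braid factor
    have hj3 : 3 ≤ j := by omega
    set u : Fin (n + 1) := v + (j : Fin (n + 1)) with hu
    have hcu : c = u := hc
    set mid : List (Fin (n + 1)) := chainL n (u - 2) (j - 2) with hmid
    have hsplit : chainL n (v + (j : Fin (n + 1))) j = u :: (u - 1) :: mid := by
      have h2 : chainL n u (2 + (j - 2))
          = chainL n u 2 ++ chainL n (u - ((2 : ℕ) : Fin (n + 1))) (j - 2) := chainL_add u 2 (j - 2)
      rw [show 2 + (j - 2) = j by omega] at h2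
      rw [← hu, h2, chainL_two, hcast2, ← hmid]
      rfl
    have hω' : ω = (chainL n s (t - j) ++ [u, u - 1]) ++ mid ++ c :: q := by
      rw [hω, hdecomp j (by omega), hsplit]
      simp
    have hcommute : ∀ x ∈ mid, affineAMatrix n x c = 2 := by
      intro x hx
      simp only [hmid, chainL, List.mem_map, List.mem_range] at hx
      obtain ⟨k, hk, hxk⟩ := hx
      have hk2 : k + 2 < n + 1 := by omega
      have hcx : c - x = ((k + 2 : ℕ) : Fin (n + 1)) := by
        rw [← hxk, hcu, hu]
        push_cast
        ring
      have hxc : x - c = ((n + 1 - (k + 2) : ℕ) : Fin (n + 1)) := by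
        rw [← neg_sub, hcx, fin_neg_cast (by omega)]
      apply affA_two
      · intro h
        have h0 : ((k + 2 : ℕ) : Fin (n + 1)) = ((0 : ℕ) : Fin (n + 1)) := by
          rw [← hcx, h, sub_self]
          push_cast
          rfl
        exact fin_cast_ne hk2 (by omega) (by omega) h0
      · rw [hxc, ← hcast1]
        exact fin_cast_ne (by omega) (by omega) (by omega)
      · rw [hcx, ← hcast1]
        exact fin_cast_ne (by omega) (by omega) (by omega)
    have hmove := commEquiv_move_left (M := affineAMatrix n) c mid hcommute
      (chainL n s (t - j) ++ [u, u - 1]) q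
    rw [← hω'] at hmove
    have htarget : (chainL n s (t - j) ++ [u, u - 1]) ++ c :: (mid ++ q)
        = chainL n s (t - j) ++ u :: (u - 1) :: u :: (mid ++ q) := by
      rw [hcu]
      simp
    rw [htarget] at hmove
    have hM : affineAMatrix n u (u - 1) = 3 := affA_three hn (by ring)
    exact fc_no_braid cs hw hred hM hmove

end Force

section Force2
open Fin.CommRing
variable {n : ℕ} {W : Type*} [Group W] {cs : CoxeterSystem (affineAMatrix n) W} {w : W}
  {ω : List (Fin (n + 1))}

lemma chainL_succ (s : Fin (n + 1)) (t : ℕ) :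
    chainL n s (t + 1) = chainL n s t ++ [s - (t : Fin (n + 1))] := by
  rw [chainL_add, chainL_one]

lemma chain_force (hn : 2 ≤ n) (hw : IsFC cs w) (hred : IsRedexOf cs ω w)
    (s : Fin (n + 1)) : ∀ (q : List (Fin (n + 1))) (t : ℕ), n + 1 ≤ t →
    ω = chainL n s t ++ q → ω = chainL n s ω.length := by
  intro q
  induction q with
  | nil =>
      intro t ht h
      have hl : ω.length = t := by rw [h]; simp
      rw [hl, h, List.append_nil]
  | cons c q' ih =>
      intro t ht h
      have hc := chain_step hn hw hred s t ht c q' h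
      have h2 : ω = chainL n s (t + 1) ++ q' := by
        rw [h, chainL_succ, hc]
        simp
      exact ih (t + 1) (by omega) h2

end Force2

section Assemble
open Fin.CommRing
variable {n : ℕ}

lemma map_decW (hn : 2 ≤ n) (i : ℕ) (hi1 : 1 ≤ i) (hi2 : i ≤ n) :
    (decW n i).map (fun k : ℕ => ((k - 1 : ℕ) : Fin (n + 1)))
      = chainL n ((n - 1 : ℕ) : Fin (n + 1)) (n + 1 - i) := by
  unfold decW chainL
  rw [List.reverse_range', List.map_map]
  apply List.map_congr_left
  intro x hx
  rw [List.mem_range] at hx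
  simp only [Function.comp_apply]
  have h1 : i + (n + 1 - i) - 1 - x - 1 = (n - 1) - x := by omega
  rw [h1, Nat.cast_sub (by omega : x ≤ n - 1)]

lemma map_block (hn : 2 ≤ n) :
    (decW n 1 ++ [n + 1]).map (fun k : ℕ => ((k - 1 : ℕ) : Fin (n + 1)))
      = chainL n ((n - 1 : ℕ) : Fin (n + 1)) (n + 1) := by
  rw [List.map_append, map_decW hn 1 le_rfl (by omega)]
  have h2 : chainL n ((n - 1 : ℕ) : Fin (n + 1)) (n + 1)
      = chainL n ((n - 1 : ℕ) : Fin (n + 1)) (n + 1 - 1)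
        ++ [((n - 1 : ℕ) : Fin (n + 1)) - ((n : ℕ) : Fin (n + 1))] := by
    have := chainL_succ ((n - 1 : ℕ) : Fin (n + 1)) n
    rw [show n + 1 - 1 = n by omega]
    exact this
  rw [h2]
  have h3 : ((n - 1 : ℕ) : Fin (n + 1)) - ((n : ℕ) : Fin (n + 1))
      = ((n : ℕ) : Fin (n + 1)) := by
    rw [sub_eq_add_neg, fin_neg_cast (by omega)]
    rw [show n + 1 - n = 1 by omega, ← Nat.cast_add]
    congr 1
    omega
  have h4 : ([n + 1] : List ℕ).map (fun k : ℕ => ((k - 1 : ℕ) : Fin (n + 1)))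
      = [((n : ℕ) : Fin (n + 1))] := by
    simp only [List.map_cons, List.map_nil]
    rw [show n + 1 - 1 = n by omega]
  rw [h3, h4]

lemma map_flatten (hn : 2 ≤ n) (m : ℕ) :
    ((List.replicate m (decW n 1 ++ [n + 1])).flatten).map
        (fun k : ℕ => ((k - 1 : ℕ) : Fin (n + 1)))
      = chainL n ((n - 1 : ℕ) : Fin (n + 1)) ((n + 1) * m) := by
  induction m with
  | zero => simp [chainL]
  | succ m ih =>
      rw [List.replicate_succ, List.flatten_cons, List.map_append, ih, map_block hn]
      have hR : chainL n ((n - 1 : ℕ) : Fin (n + 1)) ((n + 1) + (n + 1) * m)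
          = chainL n ((n - 1 : ℕ) : Fin (n + 1)) (n + 1)
            ++ chainL n ((n - 1 : ℕ) : Fin (n + 1)) ((n + 1) * m) := by
        refine (chainL_add _ (n + 1) ((n + 1) * m)).trans ?_
        rw [Fin.natCast_self, sub_zero]
      rw [show (n + 1) * (m + 1) = (n + 1) + (n + 1) * m by ring, hR]

end Assemble

/-- Let `w ∈ W(Ãₙ)` (`n ≥ 2`) be fully commutative with a reduced expression beginning
`σₙ σₙ₋₁ ⋯ σ₂ σ₁ a_{n+1}` in which the shown occurrence of `a_{n+1}` is not the last one.
Then `w = (σₙ σₙ₋₁ ⋯ σ₁ a_{n+1})^m u` for some `m` with `u = 1` or `u = σₙ σₙ₋₁ ⋯ σᵢ`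
(`1 ≤ i ≤ n`).  The (1-based) subscript `k` corresponds to the generator
`k - 1 : Fin (n+1)`, with `a_{n+1}` being subscript `n + 1`. -/
theorem fc_sigma_left_form (n : ℕ) (hn : 2 ≤ n) {W : Type*} [Group W]
    (cs : CoxeterSystem (affineAMatrix n) W) (w : W) (hw : IsFC cs w)
    (rest : List ℕ) (hrest : (n + 1) ∈ rest)
    (hred : IsRedexOf cs
      ((decW n 1 ++ [n + 1] ++ rest).map fun k => ((k - 1 : ℕ) : Fin (n + 1))) w) :
    ∃ m : ℕ, ∃ tail : List ℕ,
      (tail = [] ∨ ∃ i, 1 ≤ i ∧ i ≤ n ∧ tail = decW n i) ∧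
      w = cs.wordProd (((List.replicate m (decW n 1 ++ [n + 1])).flatten ++ tail).map
        fun k => ((k - 1 : ℕ) : Fin (n + 1))) := by
  have hsplit : (decW n 1 ++ [n + 1] ++ rest).map (fun k : ℕ => ((k - 1 : ℕ) : Fin (n + 1)))
      = chainL n ((n - 1 : ℕ) : Fin (n + 1)) (n + 1)
        ++ rest.map (fun k : ℕ => ((k - 1 : ℕ) : Fin (n + 1))) := by
    rw [List.map_append, map_block hn]
  have hforce := chain_force hn hw hred ((n - 1 : ℕ) : Fin (n + 1))
    (rest.map (fun k : ℕ => ((k - 1 : ℕ) : Fin (n + 1)))) (n + 1) le_rfl hsplit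
  set L := ((decW n 1 ++ [n + 1] ++ rest).map
    (fun k : ℕ => ((k - 1 : ℕ) : Fin (n + 1)))).length with hL
  have hLge : n + 1 ≤ L := by
    rw [hL, hsplit]
    simp
  have hmod : (n + 1) * (L / (n + 1)) + L % (n + 1) = L := Nat.div_add_mod L (n + 1)
  have hrlt : L % (n + 1) < n + 1 := Nat.mod_lt _ (by omega)
  have hw' : w = cs.wordProd ((decW n 1 ++ [n + 1] ++ rest).map
      (fun k : ℕ => ((k - 1 : ℕ) : Fin (n + 1)))) := hred.1.symm
  have hcastmul : (((n + 1) * (L / (n + 1)) : ℕ) : Fin (n + 1)) = 0 := by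
    open Fin.CommRing in
    rw [Nat.cast_mul, Fin.natCast_self, zero_mul]
  rcases Nat.eq_zero_or_pos (L % (n + 1)) with hr0 | hrpos
  · refine ⟨L / (n + 1), [], Or.inl rfl, ?_⟩
    rw [List.append_nil, map_flatten hn, show (n + 1) * (L / (n + 1)) = L by omega,
      hw', hforce]
  · refine ⟨L / (n + 1), decW n (n + 1 - L % (n + 1)),
      Or.inr ⟨n + 1 - L % (n + 1), by omega, by omega, rfl⟩, ?_⟩
    rw [List.map_append, map_flatten hn, map_decW hn (n + 1 - L % (n + 1)) (by omega) (by omega),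
      show n + 1 - (n + 1 - L % (n + 1)) = L % (n + 1) by omega]
    have hR : chainL n ((n - 1 : ℕ) : Fin (n + 1)) ((n + 1) * (L / (n + 1)) + L % (n + 1))
        = chainL n ((n - 1 : ℕ) : Fin (n + 1)) ((n + 1) * (L / (n + 1)))
          ++ chainL n ((n - 1 : ℕ) : Fin (n + 1)) (L % (n + 1)) := by
      refine (chainL_add _ _ _).trans ?_
      rw [hcastmul, sub_zero]
    rw [hw', hforce]
    conv_lhs => rw [hmod.symm]
    rw [hR]
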